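/- Let γ = γ_{p,q,l} = (1,…,p)(p+1,…,p+q)(p+q+1,…,p+q+l) ∈ S_{p+q+l}. If π, σ ∈ S_NC(p,q,l) (non-crossing annular permutations on three circles) and π ≤ σ⁻¹γ, then σ ≤ γπ⁻¹. -/

import Mathlib

open Equiv

namespace ThirdOrderFree

variable {α : Type*}

/-- The setoid whose classes are the cycles (orbits) of a permutation. -/
def sameCycleSetoid (σ : Perm α) : Setoid α :=
  ⟨σ.SameCycle,
    ⟨fun x => Equiv.Perm.SameCycle.refl σ x, fun h => h.symm, fun h h' => h.trans h'⟩⟩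

/-- Number of cycles (orbits, including fixed points) of a permutation. -/
noncomputable def numCycles (σ : Perm α) : ℕ :=
  Nat.card (Quotient (sameCycleSetoid σ))

/-- The length `|σ| = n - #(σ)`. -/
noncomputable def len (σ : Perm α) : ℕ :=
  Nat.card α - numCycles σ

/-- Join of the cycle partitions of two permutations. -/
def joinSetoid (π σ : Perm α) : Setoid α :=
  sameCycleSetoid π ⊔ sameCycleSetoid σ

/-- Number of blocks of `π ∨ σ`. -/
noncomputable def numBlocks (π σ : Perm α) : ℕ :=
  Nat.card (Quotient (joinSetoid π σ))

/-- `π ∨ σ` is the one-block partition. -/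
def JoinTop (π σ : Perm α) : Prop :=
  ∀ x y : α, (joinSetoid π σ).r x y

/-- `π` is a non-crossing (annular) permutation with respect to `γ`. -/
def SNC (γ π : Perm α) : Prop :=
  JoinTop π γ ∧
    numCycles π + numCycles (π⁻¹ * γ) + numCycles γ = Nat.card α + 2

/-- `τ` separates the points of `N`: no cycle of `τ` contains two distinct points of `N`. -/
def Separates (τ : Perm α) (N : Set α) : Prop :=
  ∀ x ∈ N, ∀ y ∈ N, τ.SameCycle x y → x = y

/-- The first-return map of `σ` on the set `{x | p x}`. -/
noncomputable def firstReturn (σ : Perm α) (p : α → Prop) (x : α) : α :=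
  (σ ^ sInf {k : ℕ | 0 < k ∧ p ((σ ^ k) x)}) x

open Classical in
/-- The restriction of `σ` to `{x | p x}`: the unique permutation agreeing with the
first-return map (it exists whenever `α` is finite). -/
noncomputable def restrictPerm (σ : Perm α) (p : α → Prop) : Perm {x // p x} :=
  if h : ∃ e : Perm {x // p x}, ∀ x : {x // p x}, (e x : α) = firstReturn σ p (x : α)
  then h.choose else 1

/-- `π ≤ σ` : each cycle of `π` is contained in a cycle of `σ` and on each cycle of
`σ` the restriction of `π` is a non-crossing permutation of that cycle. -/
def le' (π σ : Perm α) : Prop :=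
  (∀ x y : α, π.SameCycle x y → σ.SameCycle x y) ∧
  ∀ x : α,
    numCycles (restrictPerm π (σ.SameCycle x)) +
      numCycles ((restrictPerm π (σ.SameCycle x))⁻¹ * restrictPerm σ (σ.SameCycle x)) =
      Nat.card {y // σ.SameCycle x y} + 1

/-- `π ≲ σ` : on each block of `π ∨ σ`, `π` is annular non-crossing w.r.t. `σ`. -/
def ncRel (π σ : Perm α) : Prop :=
  ∀ x : α,
    SNC (restrictPerm σ ((joinSetoid π σ).r x)) (restrictPerm π ((joinSetoid π σ).r x))

/-- The permutation of `Σ i, Fin (n i)` rotating each block: the product of the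
directed cycles `T i` of lengths `n i`. -/
def blockRotate {ι : Type*} (n : ι → ℕ) : Perm ((i : ι) × Fin (n i)) :=
  Equiv.sigmaCongrRight fun i => finRotate (n i)

/-- The first elements of the blocks. -/
def zeroSection {ι : Type*} (n : ι → ℕ) (hn : ∀ i, 0 < n i) :
    ι ≃ {x : (i : ι) × Fin (n i) // x.2.val = 0} where
  toFun i := ⟨⟨i, ⟨0, hn i⟩⟩, rfl⟩
  invFun x := x.1.1
  left_inv i := rfl
  right_inv := fun x => by
    obtain ⟨⟨i, j⟩, hj⟩ := x
    exact Subtype.ext (congrArg (Sigma.mk i) (Fin.ext hj.symm))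

/-- `π_{\vec n}` : merge the blocks `T i` along the cycles of `π`; within a block it
moves forward, and the last element of block `i` is sent to the first element of
block `π i`. -/
def mergePerm {ι : Type*} (n : ι → ℕ) (hn : ∀ i, 0 < n i) (π : Perm ι) :
    Perm ((i : ι) × Fin (n i)) :=
  (π.extendDomain (zeroSection n hn)) * blockRotate n


/-! ### Auxiliary development for `stmt3` -/

section Aux

variable {β : Type*}

/-- If a setoid relates every point to its image under `f`, then it contains the
same-cycle relation of `f`. -/
lemma rel_of_sameCycle [Finite β] (S : Setoid β) (f : Perm β) (h : ∀ x, S.r x (f x))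
    {x y : β} (hxy : f.SameCycle x y) : S.r x y := by
  obtain ⟨i, hlt, rfl⟩ := hxy.exists_pow_eq'
  clear hlt hxy
  induction i with
  | zero => simpa using S.iseqv.refl x
  | succ n ih =>
    rw [pow_succ', Equiv.Perm.mul_apply]
    exact S.iseqv.trans ih (h _)

/-- Adjoin to a setoid the identification of the classes of `a` and `b`. -/
def bridge (s : Setoid β) (a b : β) : Setoid β where
  r x y := s.r x y ∨ (s.r x a ∧ s.r b y) ∨ (s.r x b ∧ s.r a y)
  iseqv := by
    constructor
    · intro x; exact Or.inl (s.iseqv.refl x)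
    · rintro x y (h | ⟨h1, h2⟩ | ⟨h1, h2⟩)
      · exact Or.inl (s.iseqv.symm h)
      · exact Or.inr (Or.inr ⟨s.iseqv.symm h2, s.iseqv.symm h1⟩)
      · exact Or.inr (Or.inl ⟨s.iseqv.symm h2, s.iseqv.symm h1⟩)
    · rintro x y z (h | ⟨h1, h2⟩ | ⟨h1, h2⟩) (h' | ⟨h1', h2'⟩ | ⟨h1', h2'⟩)
      · exact Or.inl (s.iseqv.trans h h')
      · exact Or.inr (Or.inl ⟨s.iseqv.trans h h1', h2'⟩)
      · exact Or.inr (Or.inr ⟨s.iseqv.trans h h1', h2'⟩)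
      · exact Or.inr (Or.inl ⟨h1, s.iseqv.trans h2 h'⟩)
      · exact Or.inl (s.iseqv.trans
          (s.iseqv.trans h1 (s.iseqv.symm (s.iseqv.trans h2 h1'))) h2')
      · exact Or.inl (s.iseqv.trans h1 h2')
      · exact Or.inr (Or.inr ⟨h1, s.iseqv.trans h2 h'⟩)
      · exact Or.inl (s.iseqv.trans h1 h2')
      · exact Or.inl (s.iseqv.trans
          (s.iseqv.trans h1 (s.iseqv.symm (s.iseqv.trans h2 h1'))) h2')

lemma bridge_rel_left {s : Setoid β} {a b x y : β} (h : s.r x y) : (bridge s a b).r x y :=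
  Or.inl h

/-- Coarsening a setoid does not increase the number of classes. -/
lemma card_quot_le_of_imp [Finite β] {s t : Setoid β} (h : ∀ x y, s.r x y → t.r x y) :
    Nat.card (Quotient t) ≤ Nat.card (Quotient s) := by
  refine Nat.card_le_card_of_surjective
    (Quotient.lift (Quotient.mk t) fun a b hab => Quotient.sound (h a b hab)) ?_
  intro q
  obtain ⟨a, rfl⟩ := Quotient.exists_rep q
  exact ⟨Quotient.mk s a, rfl⟩

/-- Identifying the classes of two points decreases the number of classes by at most 1. -/
lemma card_quot_le_bridge [Finite β] (s : Setoid β) (a b : β) :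
    Nat.card (Quotient s) ≤ Nat.card (Quotient (bridge s a b)) + 1 := by
  classical
  set g : Quotient s → Quotient (bridge s a b) :=
    Quotient.lift (Quotient.mk (bridge s a b)) (fun x y hxy => Quotient.sound (Or.inl hxy))
    with hg
  letI : Fintype (Quotient (bridge s a b)) := Fintype.ofFinite _
  have hcard : Nat.card (Option (Quotient (bridge s a b)))
      = Nat.card (Quotient (bridge s a b)) + 1 := by
    rw [Nat.card_eq_fintype_card, Nat.card_eq_fintype_card, Fintype.card_option]
  rw [← hcard]
  refine Nat.card_le_card_of_injective
    (fun q => if q = Quotient.mk s b then none else some (g q)) ?_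
  intro q1 q2 heq
  dsimp only at heq
  by_cases h1 : q1 = Quotient.mk s b <;> by_cases h2 : q2 = Quotient.mk s b
  · rw [h1, h2]
  · rw [if_pos h1, if_neg h2] at heq; exact absurd heq (by simp)
  · rw [if_neg h1, if_pos h2] at heq; exact absurd heq (by simp)
  · rw [if_neg h1, if_neg h2] at heq
    obtain ⟨x, rfl⟩ := Quotient.exists_rep q1
    obtain ⟨y, rfl⟩ := Quotient.exists_rep q2
    have : (bridge s a b).r x y := Quotient.exact (Option.some.inj heq)
    rcases this with h | ⟨ha', hb'⟩ | ⟨ha', hb'⟩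
    · exact Quotient.sound h
    · exact absurd (Quotient.sound (s.iseqv.symm hb') : Quotient.mk s y = Quotient.mk s b) h2
    · exact absurd (Quotient.sound ha' : Quotient.mk s x = Quotient.mk s b) h1

/-- If a coarsening has the same number of classes, the setoids have the same classes. -/
lemma rel_of_imp_of_card_le [Finite β] {s t : Setoid β} (h : ∀ x y, s.r x y → t.r x y)
    (hc : Nat.card (Quotient s) ≤ Nat.card (Quotient t)) :
    ∀ x y, t.r x y → s.r x y := by
  set f : Quotient s → Quotient t :=
    Quotient.lift (Quotient.mk t) (fun a b hab => Quotient.sound (h a b hab)) with hf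
  have hsurj : Function.Surjective f := by
    intro q
    obtain ⟨a, rfl⟩ := Quotient.exists_rep q
    exact ⟨Quotient.mk s a, rfl⟩
  have hbij : Function.Bijective f :=
    (Nat.bijective_iff_surjective_and_card f).2
      ⟨hsurj, le_antisymm hc (Nat.card_le_card_of_surjective f hsurj)⟩
  intro x y hxy
  have : f (Quotient.mk s x) = f (Quotient.mk s y) := Quotient.sound hxy
  exact Quotient.exact (hbij.1 this)

lemma numCycles_le_card [Finite β] (f : Perm β) : numCycles f ≤ Nat.card β :=
  Nat.card_le_card_of_surjective (Quotient.mk (sameCycleSetoid f))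
    (fun q => Quotient.exists_rep q)

lemma eq_one_of_card_le_numCycles [Finite β] (f : Perm β) (h : Nat.card β ≤ numCycles f) :
    f = 1 := by
  have hsurj : Function.Surjective (Quotient.mk (sameCycleSetoid f)) :=
    fun q => Quotient.exists_rep q
  have h' : Nat.card β ≤ Nat.card (Quotient (sameCycleSetoid f)) := h
  have hbij : Function.Bijective (Quotient.mk (sameCycleSetoid f)) :=
    (Nat.bijective_iff_surjective_and_card _).2
      ⟨hsurj, le_antisymm h' (Nat.card_le_card_of_surjective _ hsurj)⟩
  ext x
  have hrel : (sameCycleSetoid f).r x (f x) := ⟨1, by simp⟩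
  have : Quotient.mk (sameCycleSetoid f) x = Quotient.mk (sameCycleSetoid f) (f x) :=
    Quotient.sound hrel
  simpa using (hbij.1 this).symm

lemma numCycles_one [Finite β] : numCycles (1 : Perm β) = Nat.card β := by
  refine le_antisymm (numCycles_le_card 1) ?_
  refine Nat.card_le_card_of_injective (Quotient.mk (sameCycleSetoid (1 : Perm β))) ?_
  intro x y hxy
  exact Equiv.Perm.sameCycle_one.1 (Quotient.exact hxy)

lemma numCycles_conj (g f : Perm β) : numCycles (g * f * g⁻¹) = numCycles f := by
  refine Nat.card_congr (Quotient.congr (g⁻¹ : Perm β) ?_)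
  intro a b
  exact Equiv.Perm.sameCycle_conj

/-- Splitting: multiplying on the left by `swap a (f a)` strictly increases the number
of cycles. -/
lemma numCycles_lt_swap_mul [Finite β] [DecidableEq β] (f : Perm β) {a : β} (ha : f a ≠ a) :
    numCycles f < numCycles (swap a (f a) * f) := by
  classical
  set t := swap a (f a) * f with ht
  have hta : t a = a := by
    rw [ht, Equiv.Perm.mul_apply, swap_apply_right]
  have hstep : ∀ x, f.SameCycle x (t x) := by
    intro x
    rw [ht, Equiv.Perm.mul_apply]
    have hx : f.SameCycle x (f x) := ⟨1, by simp⟩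
    rcases eq_or_ne (f x) a with h | h
    · rw [h, swap_apply_left]
      exact (h ▸ hx).trans ⟨1, by simp⟩
    rcases eq_or_ne (f x) (f a) with h' | h'
    · rw [h', swap_apply_right]
      exact (h' ▸ hx).trans (Equiv.Perm.SameCycle.symm ⟨1, by simp⟩)
    · rw [swap_apply_of_ne_of_ne h h']
      exact hx
  have hsub : ∀ x y, t.SameCycle x y → f.SameCycle x y := fun x y hxy =>
    rel_of_sameCycle (sameCycleSetoid f) t hstep hxy
  set F : Quotient (sameCycleSetoid t) → Quotient (sameCycleSetoid f) :=
    Quotient.lift (Quotient.mk (sameCycleSetoid f))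
      (fun x y hxy => Quotient.sound (hsub x y hxy)) with hF
  have hsurj : Function.Surjective F := by
    intro q
    obtain ⟨x, rfl⟩ := Quotient.exists_rep q
    exact ⟨Quotient.mk (sameCycleSetoid t) x, rfl⟩
  have hpowfix : ∀ i : ℕ, (t ^ i) a = a := by
    intro i
    induction i with
    | zero => rfl
    | succ n ih => rw [pow_succ, Equiv.Perm.mul_apply, hta, ih]
  have hne : (Quotient.mk (sameCycleSetoid t) a) ≠ Quotient.mk (sameCycleSetoid t) (f a) := by
    intro hEq
    have hsc : t.SameCycle a (f a) := Quotient.exact hEq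
    obtain ⟨i, _, hi⟩ := hsc.exists_pow_eq'
    exact ha (by rw [← hi, hpowfix i])
  have hninj : ¬ Function.Injective F := by
    intro hinj
    refine hne (hinj ?_)
    have : f.SameCycle a (f a) := ⟨1, by simp⟩
    exact Quotient.sound this
  letI : Fintype (Quotient (sameCycleSetoid t)) := Fintype.ofFinite _
  letI : Fintype (Quotient (sameCycleSetoid f)) := Fintype.ofFinite _
  rw [numCycles, numCycles, Nat.card_eq_fintype_card, Nat.card_eq_fintype_card]
  exact Fintype.card_lt_of_surjective_not_injective F hsurj hninj

/-- Multiplying on the right by a transposition decreases the number of cycles by at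
most 1. -/
lemma numCycles_le_mul_swap [Finite β] [DecidableEq β] (A : Perm β) (a b : β) :
    numCycles A ≤ numCycles (A * swap a b) + 1 := by
  set t := A * swap a b with ht
  have hstep : ∀ x, (bridge (sameCycleSetoid A) a (A b)).r x (t x) := by
    intro x
    have htx : t x = A (swap a b x) := rfl
    rcases eq_or_ne x a with rfl | hxa
    · rw [htx, swap_apply_left]
      exact Or.inr (Or.inl ⟨(sameCycleSetoid A).iseqv.refl x,
        (sameCycleSetoid A).iseqv.refl (A b)⟩)
    rcases eq_or_ne x b with rfl | hxb
    · rw [htx, swap_apply_right]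
      exact Or.inr (Or.inr ⟨⟨1, by simp⟩, ⟨1, by simp⟩⟩)
    · rw [htx, swap_apply_of_ne_of_ne hxa hxb]
      exact Or.inl ⟨1, by simp⟩
  have h1 : ∀ x y, t.SameCycle x y → (bridge (sameCycleSetoid A) a (A b)).r x y :=
    fun x y hxy => rel_of_sameCycle _ t hstep hxy
  calc numCycles A ≤ Nat.card (Quotient (bridge (sameCycleSetoid A) a (A b))) + 1 :=
        card_quot_le_bridge _ a (A b)
    _ ≤ numCycles t + 1 := Nat.add_le_add_right (card_quot_le_of_imp h1) 1

/-- Subadditivity of the Cayley length: `#(A) + #(B) ≤ #(A·B) + n`. -/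
lemma numCycles_mul_le [Finite β] (A B : Perm β) :
    numCycles A + numCycles B ≤ numCycles (A * B) + Nat.card β := by
  classical
  suffices H : ∀ (k : ℕ) (A B : Perm β), Nat.card β - numCycles B ≤ k →
      numCycles A + numCycles B ≤ numCycles (A * B) + Nat.card β from H _ A B le_rfl
  intro k
  induction k with
  | zero =>
    intro A B hB
    have hle := numCycles_le_card B
    have hB1 : B = 1 := eq_one_of_card_le_numCycles B (by omega)
    subst hB1
    rw [mul_one, numCycles_one]
  | succ k ih =>
    intro A B hB
    rcases eq_or_ne B 1 with rfl | hB1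
    · rw [mul_one, numCycles_one]
    · have : ∃ a, B a ≠ a := by
        by_contra hcon
        push_neg at hcon
        exact hB1 (Equiv.ext fun x => by simpa using hcon x)
      obtain ⟨a, ha⟩ := this
      set B' := swap a (B a) * B with hB'
      have hT1 : numCycles B < numCycles B' := numCycles_lt_swap_mul B ha
      have hBeq : B = swap a (B a) * B' := by
        rw [hB', ← mul_assoc, swap_mul_self, one_mul]
      have hmeas : Nat.card β - numCycles B' ≤ k := by
        have := numCycles_le_card B'
        omega
      have hIH := ih (A * swap a (B a)) B' hmeas
      have hmul : A * swap a (B a) * B' = A * B := by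
        rw [hB', ← mul_assoc, mul_assoc A _ _, swap_mul_self, mul_one]
      rw [hmul] at hIH
      have h3 : numCycles A ≤ numCycles (A * swap a (B a)) + 1 :=
        numCycles_le_mul_swap A a (B a)
      omega

/-- Semimodularity-type bound: `#(f) + #(g) ≤ n + #(f ∨ g)`. -/
lemma numCycles_add_le_join [Finite β] (f g : Perm β) :
    numCycles f + numCycles g ≤ Nat.card β + Nat.card (Quotient (joinSetoid f g)) := by
  classical
  suffices H : ∀ (k : ℕ) (f g : Perm β), Nat.card β - numCycles f ≤ k →
      numCycles f + numCycles g ≤ Nat.card β + Nat.card (Quotient (joinSetoid f g)) from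
    H _ f g le_rfl
  have base : ∀ g : Perm β, numCycles (1 : Perm β) + numCycles g ≤
      Nat.card β + Nat.card (Quotient (joinSetoid 1 g)) := by
    intro g
    rw [numCycles_one]
    have h2 : ∀ x y, (sameCycleSetoid g).r x y → (joinSetoid 1 g).r x y :=
      fun x y hxy => Setoid.le_def.1 le_sup_right hxy
    have h1 : joinSetoid 1 g ≤ sameCycleSetoid g := by
      refine sup_le ?_ le_rfl
      intro x y hxy
      have : x = y := Equiv.Perm.sameCycle_one.1 hxy
      exact this ▸ (sameCycleSetoid g).iseqv.refl x
    have hle : numCycles g ≤ Nat.card (Quotient (joinSetoid 1 g)) :=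
      card_quot_le_of_imp (fun x y hxy => Setoid.le_def.1 h1 hxy)
    omega
  intro k
  induction k with
  | zero =>
    intro f g hf
    have hle := numCycles_le_card f
    have hf1 : f = 1 := eq_one_of_card_le_numCycles f (by omega)
    subst hf1
    exact base g
  | succ k ih =>
    intro f g hf
    rcases eq_or_ne f 1 with rfl | hf1
    · exact base g
    · have : ∃ a, f a ≠ a := by
        by_contra hcon
        push_neg at hcon
        exact hf1 (Equiv.ext fun x => by simpa using hcon x)
      obtain ⟨a, ha⟩ := this
      set f' := swap a (f a) * f with hf'
      have hT1 : numCycles f < numCycles f' := numCycles_lt_swap_mul f ha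
      have hfeq : f = swap a (f a) * f' := by
        rw [hf', ← mul_assoc, swap_mul_self, one_mul]
      have hmeas : Nat.card β - numCycles f' ≤ k := by
        have := numCycles_le_card f'
        omega
      have hIH := ih f' g hmeas
      -- `joinSetoid f g ≤ bridge (joinSetoid f' g) a (f a)`
      have hbr : ∀ x y, (joinSetoid f g).r x y →
          (bridge (joinSetoid f' g) a (f a)).r x y := by
        have hfle : ∀ x y, f.SameCycle x y → (bridge (joinSetoid f' g) a (f a)).r x y := by
          intro x y hxy
          refine rel_of_sameCycle _ f ?_ hxy
          intro x
          have hfx : f x = swap a (f a) (f' x) := by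
            conv_lhs => rw [hfeq]
            rfl
          have hxf' : (joinSetoid f' g).r x (f' x) :=
            Setoid.le_def.1 le_sup_left (⟨1, by simp⟩ : f'.SameCycle x (f' x))
          rcases eq_or_ne (f' x) a with h | h
          · rw [hfx, h, swap_apply_left]
            exact Or.inr (Or.inl ⟨h ▸ hxf', (joinSetoid f' g).iseqv.refl (f a)⟩)
          rcases eq_or_ne (f' x) (f a) with h' | h'
          · rw [hfx, h', swap_apply_right]
            exact Or.inr (Or.inr ⟨h' ▸ hxf', (joinSetoid f' g).iseqv.refl a⟩)
          · rw [hfx, swap_apply_of_ne_of_ne h h']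
            exact Or.inl hxf'
        have hgle : ∀ x y, g.SameCycle x y → (bridge (joinSetoid f' g) a (f a)).r x y :=
          fun x y hxy => Or.inl (Setoid.le_def.1 le_sup_right hxy)
        intro x y hxy
        have : joinSetoid f g ≤ bridge (joinSetoid f' g) a (f a) :=
          sup_le (Setoid.le_def.2 fun {x y} h => hfle x y h)
            (Setoid.le_def.2 fun {x y} h => hgle x y h)
        exact Setoid.le_def.1 this hxy
      have hc1 : Nat.card (Quotient (bridge (joinSetoid f' g) a (f a)))
          ≤ Nat.card (Quotient (joinSetoid f g)) := card_quot_le_of_imp hbr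
      have hc2 : Nat.card (Quotient (joinSetoid f' g))
          ≤ Nat.card (Quotient (bridge (joinSetoid f' g) a (f a))) + 1 :=
        card_quot_le_bridge _ a (f a)
      omega

/-- `restrictPerm` of an invariant predicate is `subtypePerm`. -/
lemma restrictPerm_eq_subtypePerm (σ : Perm β) (p : β → Prop) (hp : ∀ x, p x ↔ p (σ x)) :
    restrictPerm σ p = σ.subtypePerm (fun x => (hp x).symm) := by
  have hfr : ∀ x : {x // p x}, firstReturn σ p (x : β) = σ (x : β) := by
    intro x
    have h1 : (1 : ℕ) ∈ {k : ℕ | 0 < k ∧ p ((σ ^ k) (x : β))} :=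
      ⟨one_pos, by simpa using (hp _).1 x.2⟩
    have hInf : sInf {k : ℕ | 0 < k ∧ p ((σ ^ k) (x : β))} = 1 := by
      have hmem := Nat.sInf_mem ⟨1, h1⟩
      have hle := Nat.sInf_le h1
      have hpos : 0 < sInf {k : ℕ | 0 < k ∧ p ((σ ^ k) (x : β))} := hmem.1
      omega
    rw [firstReturn, hInf, pow_one]
  have hex : ∃ e : Perm {x // p x}, ∀ x : {x // p x}, (e x : β) = firstReturn σ p (x : β) :=
    ⟨σ.subtypePerm (fun x => (hp x).symm), fun x => (hfr x).symm⟩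
  rw [restrictPerm, dif_pos hex]
  refine Equiv.ext fun x => Subtype.ext ?_
  exact (hex.choose_spec x).trans (hfr x)

lemma card_sigma_nat {ι : Type*} [Fintype ι] (f : ι → Type*) [∀ i, Finite (f i)] :
    Nat.card ((i : ι) × f i) = ∑ i, Nat.card (f i) := by
  letI := fun i => Fintype.ofFinite (f i)
  simp only [Nat.card_eq_fintype_card]
  exact Fintype.card_sigma

lemma sameCycle_subtype {σ : Perm β} {p : β → Prop} (hp : ∀ x, p x ↔ p (σ x))
    [Finite β] {y z : {x // p x}} (h : σ.SameCycle (y : β) (z : β)) :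
    (σ.subtypePerm (fun x => (hp x).symm)).SameCycle y z := by
  obtain ⟨i, _, hi⟩ := h.exists_pow_eq'
  refine ⟨(i : ℤ), ?_⟩
  rw [zpow_natCast, Equiv.Perm.subtypePerm_pow]
  exact Subtype.ext hi

lemma sameCycle_of_subtype {σ : Perm β} {p : β → Prop} {hp : ∀ x, p x ↔ p (σ x)}
    {y z : {x // p x}} (h : (σ.subtypePerm (fun x => (hp x).symm)).SameCycle y z) :
    σ.SameCycle (y : β) (z : β) := by
  obtain ⟨i, hi⟩ := h
  rw [Equiv.Perm.subtypePerm_zpow] at hi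
  exact ⟨i, congrArg Subtype.val hi⟩

/-- Decomposition of the cycle count of `τ` along the cycles of `σ`, when every cycle
of `τ` is contained in a cycle of `σ`. -/
lemma numCycles_eq_sum [Finite β] (σ τ : Perm β) (h : ∀ x, σ.SameCycle x (τ x))
    [Fintype (Quotient (sameCycleSetoid σ))] :
    numCycles τ = ∑ c : Quotient (sameCycleSetoid σ),
      numCycles (restrictPerm τ fun y => Quotient.mk (sameCycleSetoid σ) y = c) := by
  have hcyc : ∀ x y : β, τ.SameCycle x y → σ.SameCycle x y :=
    fun x y hxy => rel_of_sameCycle (sameCycleSetoid σ) τ h hxy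
  set F : Quotient (sameCycleSetoid τ) → Quotient (sameCycleSetoid σ) :=
    Quotient.lift (Quotient.mk (sameCycleSetoid σ))
      (fun a b hab => Quotient.sound (hcyc a b hab)) with hF
  have hcongr := Nat.card_congr (Equiv.sigmaFiberEquiv F).symm
  rw [numCycles, hcongr, card_sigma_nat]
  refine Finset.sum_congr rfl fun c _ => ?_
  have hp : ∀ x : β, (Quotient.mk (sameCycleSetoid σ) x = c)
      ↔ (Quotient.mk (sameCycleSetoid σ) (τ x) = c) := fun x =>
    iff_of_eq (congrArg (· = c) (Quotient.sound (h x)))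
  rw [restrictPerm_eq_subtypePerm τ _ hp]
  set g : Quotient (sameCycleSetoid (τ.subtypePerm (fun x => (hp x).symm))) → {q // F q = c} :=
    Quotient.lift
      (fun y : {x // Quotient.mk (sameCycleSetoid σ) x = c} =>
        (⟨Quotient.mk (sameCycleSetoid τ) (y : β), y.2⟩ : {q // F q = c}))
      (fun y z hyz => Subtype.ext (Quotient.sound (sameCycle_of_subtype (hp := hp) hyz))) with hgdef
  have hinj : Function.Injective g := by
    intro q1 q2
    refine Quotient.inductionOn₂ q1 q2 fun y z heq => ?_
    have h1 : Quotient.mk (sameCycleSetoid τ) (y : β) = Quotient.mk (sameCycleSetoid τ) (z : β) :=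
      congrArg Subtype.val heq
    exact Quotient.sound (sameCycle_subtype hp (Quotient.exact h1))
  have hsurjg : Function.Surjective g := by
    rintro ⟨q, hq⟩
    obtain ⟨w, rfl⟩ := Quotient.exists_rep q
    exact ⟨Quotient.mk _ (⟨w, hq⟩ : {x // Quotient.mk (sameCycleSetoid σ) x = c}),
      Subtype.ext rfl⟩
  exact (Nat.card_eq_of_bijective g ⟨hinj, hsurjg⟩).symm

lemma card_eq_sum_fibers [Finite β] (σ : Perm β)
    [Fintype (Quotient (sameCycleSetoid σ))] :
    Nat.card β = ∑ c : Quotient (sameCycleSetoid σ),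
      Nat.card {y // Quotient.mk (sameCycleSetoid σ) y = c} := by
  rw [← card_sigma_nat]
  exact Nat.card_congr (Equiv.sigmaFiberEquiv (Quotient.mk (sameCycleSetoid σ))).symm

/-- The restriction of `σ` to one of its own cycles is a single cycle. -/
lemma numCycles_restrict_self [Finite β] (σ : Perm β)
    (c : Quotient (sameCycleSetoid σ)) :
    numCycles (restrictPerm σ fun y => Quotient.mk (sameCycleSetoid σ) y = c) = 1 := by
  have hp : ∀ x : β, (Quotient.mk (sameCycleSetoid σ) x = c)
      ↔ (Quotient.mk (sameCycleSetoid σ) (σ x) = c) := fun x =>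
    iff_of_eq (congrArg (· = c)
      (Quotient.sound (⟨1, by simp⟩ : σ.SameCycle x (σ x))))
  rw [restrictPerm_eq_subtypePerm σ _ hp]
  rw [numCycles, Nat.card_eq_one_iff_unique]
  constructor
  · constructor
    intro q1 q2
    refine Quotient.inductionOn₂ q1 q2 fun y z => ?_
    have hsc : σ.SameCycle (y : β) (z : β) := Quotient.exact (y.2.trans z.2.symm)
    exact Quotient.sound (sameCycle_subtype hp hsc)
  · obtain ⟨w, hw⟩ := Quotient.exists_rep c
    exact ⟨Quotient.mk _ ⟨w, hw⟩⟩

/-- The key characterization: `π ≤' σ` iff the cycle counts satisfy the geodesic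
condition `#(π) + #(π⁻¹σ) = n + #(σ)`. -/
lemma le'_iff [Finite β] (π σ : Perm β) :
    le' π σ ↔ numCycles π + numCycles (π⁻¹ * σ) = Nat.card β + numCycles σ := by
  classical
  letI : Fintype (Quotient (sameCycleSetoid σ)) := Fintype.ofFinite _
  have hpred : ∀ x : β, σ.SameCycle x
      = fun y => Quotient.mk (sameCycleSetoid σ) y = Quotient.mk (sameCycleSetoid σ) x := by
    intro x
    funext y
    apply propext
    constructor
    · intro hsc; exact Quotient.sound hsc.symm
    · intro hq; exact (Quotient.exact hq).symm
  have hσinv : ∀ c : Quotient (sameCycleSetoid σ), ∀ x : β,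
      (Quotient.mk (sameCycleSetoid σ) x = c) ↔ (Quotient.mk (sameCycleSetoid σ) (σ x) = c) :=
    fun c x => iff_of_eq (congrArg (· = c)
      (Quotient.sound (⟨1, by simp⟩ : σ.SameCycle x (σ x))))
  have hσcard : numCycles σ = ∑ _c : Quotient (sameCycleSetoid σ), 1 := by
    rw [numCycles, Nat.card_eq_fintype_card, Finset.sum_const, smul_eq_mul, mul_one,
      Finset.card_univ]
  have hcardsum := card_eq_sum_fibers σ
  -- the combination lemma, valid whenever cycles of `π` sit inside cycles of `σ`
  have mkcomb : ∀ (hπstep : ∀ x, σ.SameCycle x (π x))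
      (hρstep : ∀ x, σ.SameCycle x ((π⁻¹ * σ) x)),
      ∀ c : Quotient (sameCycleSetoid σ),
      (restrictPerm π fun y => Quotient.mk (sameCycleSetoid σ) y = c)⁻¹ *
        (restrictPerm σ fun y => Quotient.mk (sameCycleSetoid σ) y = c)
      = restrictPerm (π⁻¹ * σ) fun y => Quotient.mk (sameCycleSetoid σ) y = c := by
    intro hπstep hρstep c
    have hπinv : ∀ x : β, (Quotient.mk (sameCycleSetoid σ) x = c)
        ↔ (Quotient.mk (sameCycleSetoid σ) (π x) = c) := fun x =>
      iff_of_eq (congrArg (· = c) (Quotient.sound (hπstep x)))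
    have hρinv : ∀ x : β, (Quotient.mk (sameCycleSetoid σ) x = c)
        ↔ (Quotient.mk (sameCycleSetoid σ) ((π⁻¹ * σ) x) = c) := fun x =>
      iff_of_eq (congrArg (· = c) (Quotient.sound (hρstep x)))
    rw [restrictPerm_eq_subtypePerm π _ hπinv, restrictPerm_eq_subtypePerm σ _ (hσinv c),
      restrictPerm_eq_subtypePerm (π⁻¹ * σ) _ hρinv, Equiv.Perm.inv_subtypePerm,
      Equiv.Perm.subtypePerm_mul]
  constructor
  · rintro ⟨hcont, hcyc⟩
    have hπstep : ∀ x, σ.SameCycle x (π x) := fun x => hcont x (π x) ⟨1, by simp⟩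
    have hρstep : ∀ x, σ.SameCycle x ((π⁻¹ * σ) x) := by
      intro x
      have h1 : σ.SameCycle x (σ x) := ⟨1, by simp⟩
      have h2 : π.SameCycle (π⁻¹ (σ x)) (σ x) := ⟨1, by simp⟩
      exact h1.trans (hcont _ _ h2).symm
    rw [numCycles_eq_sum σ π hπstep, numCycles_eq_sum σ (π⁻¹ * σ) hρstep, hcardsum, hσcard,
      ← Finset.sum_add_distrib, ← Finset.sum_add_distrib]
    refine Finset.sum_congr rfl fun c _ => ?_
    obtain ⟨x, rfl⟩ := Quotient.exists_rep c
    have hx := hcyc x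
    rw [hpred x] at hx
    try simp only [hpred x] at hx
    rw [mkcomb hπstep hρstep (Quotient.mk (sameCycleSetoid σ) x)] at hx
    exact hx
  · intro hcount
    have hσρ : σ = π * (π⁻¹ * σ) := by rw [mul_inv_cancel_left]
    have hJstep : ∀ x, (joinSetoid π (π⁻¹ * σ)).r x (σ x) := by
      intro x
      have h1 : (joinSetoid π (π⁻¹ * σ)).r x ((π⁻¹ * σ) x) :=
        Setoid.le_def.1 le_sup_right (⟨1, by simp⟩ : (π⁻¹ * σ).SameCycle x ((π⁻¹ * σ) x))
      have h2 : (joinSetoid π (π⁻¹ * σ)).r ((π⁻¹ * σ) x) (π ((π⁻¹ * σ) x)) :=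
        Setoid.le_def.1 le_sup_left (⟨1, by simp⟩ : π.SameCycle _ _)
      have h3 := (joinSetoid π (π⁻¹ * σ)).iseqv.trans h1 h2
      have : π ((π⁻¹ * σ) x) = σ x := by
        simp [Equiv.Perm.mul_apply]
      rwa [this] at h3
    have hL2 : ∀ x y, σ.SameCycle x y → (joinSetoid π (π⁻¹ * σ)).r x y :=
      fun x y hxy => rel_of_sameCycle _ σ hJstep hxy
    have hle1 : Nat.card (Quotient (joinSetoid π (π⁻¹ * σ))) ≤ numCycles σ :=
      card_quot_le_of_imp (s := sameCycleSetoid σ) (t := joinSetoid π (π⁻¹ * σ)) hL2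
    have hL1 := numCycles_add_le_join π (π⁻¹ * σ)
    have hcontJ : ∀ x y, (joinSetoid π (π⁻¹ * σ)).r x y → σ.SameCycle x y := by
      refine rel_of_imp_of_card_le (s := sameCycleSetoid σ) (t := joinSetoid π (π⁻¹ * σ)) hL2 ?_
      have hnum : Nat.card (Quotient (sameCycleSetoid σ)) = numCycles σ := rfl
      omega
    have hcont : ∀ x y, π.SameCycle x y → σ.SameCycle x y :=
      fun x y hxy => hcontJ x y (Setoid.le_def.1 le_sup_left hxy)
    refine ⟨hcont, ?_⟩
    have hπstep : ∀ x, σ.SameCycle x (π x) := fun x => hcont x (π x) ⟨1, by simp⟩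
    have hρstep : ∀ x, σ.SameCycle x ((π⁻¹ * σ) x) := by
      intro x
      have h1 : σ.SameCycle x (σ x) := ⟨1, by simp⟩
      have h2 : π.SameCycle (π⁻¹ (σ x)) (σ x) := ⟨1, by simp⟩
      exact h1.trans (hcont _ _ h2).symm
    have hclass : ∀ c : Quotient (sameCycleSetoid σ),
        numCycles (restrictPerm π fun y => Quotient.mk (sameCycleSetoid σ) y = c)
          + numCycles (restrictPerm (π⁻¹ * σ) fun y => Quotient.mk (sameCycleSetoid σ) y = c)
        ≤ Nat.card {y // Quotient.mk (sameCycleSetoid σ) y = c} + 1 := by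
      intro c
      rw [← mkcomb hπstep hρstep c]
      have hS := numCycles_mul_le
        (restrictPerm π fun y => Quotient.mk (sameCycleSetoid σ) y = c)
        ((restrictPerm π fun y => Quotient.mk (sameCycleSetoid σ) y = c)⁻¹ *
          (restrictPerm σ fun y => Quotient.mk (sameCycleSetoid σ) y = c))
      rw [mul_inv_cancel_left] at hS
      have h1 := numCycles_restrict_self σ c
      omega
    have hsum : ∑ c : Quotient (sameCycleSetoid σ),
        (numCycles (restrictPerm π fun y => Quotient.mk (sameCycleSetoid σ) y = c)
          + numCycles (restrictPerm (π⁻¹ * σ) fun y => Quotient.mk (sameCycleSetoid σ) y = c))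
        = ∑ c : Quotient (sameCycleSetoid σ),
          (Nat.card {y // Quotient.mk (sameCycleSetoid σ) y = c} + 1) := by
      rw [Finset.sum_add_distrib, Finset.sum_add_distrib,
        ← numCycles_eq_sum σ π hπstep, ← numCycles_eq_sum σ (π⁻¹ * σ) hρstep,
        ← hcardsum, ← hσcard]
      exact hcount
    have hpt := (Finset.sum_eq_sum_iff_of_le fun c _ => hclass c).1 hsum
    intro x
    have hx := hpt (Quotient.mk (sameCycleSetoid σ) x) (Finset.mem_univ _)
    rw [← mkcomb hπstep hρstep (Quotient.mk (sameCycleSetoid σ) x)] at hx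
    rw [hpred x]
    try simp only [hpred x]
    exact hx

end Aux

/-- if `π, σ ∈ S_NC(p,q,l)` and `π ≤ σ⁻¹γ`, then `σ ≤ γπ⁻¹`. -/
theorem stmt3 (p q l : ℕ)
    (γ : Equiv.Perm ((i : Fin 3) × Fin (![p, q, l] i)))
    (hγ : γ = blockRotate ![p, q, l])
    (π σ : Equiv.Perm ((i : Fin 3) × Fin (![p, q, l] i)))
    (hπ : SNC γ π) (hσ : SNC γ σ) (h : le' π (σ⁻¹ * γ)) :
    le' σ (γ * π⁻¹) := by
  have e1 := (le'_iff π (σ⁻¹ * γ)).1 h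
  have e2 : numCycles (π⁻¹ * (σ⁻¹ * γ)) = numCycles (σ⁻¹ * (γ * π⁻¹)) := by
    have hc : π⁻¹ * (σ⁻¹ * γ) = π⁻¹ * (σ⁻¹ * (γ * π⁻¹)) * π⁻¹⁻¹ := by group
    rw [hc, numCycles_conj]
  have e3 : numCycles (γ * π⁻¹) = numCycles (π⁻¹ * γ) := by
    have hc : γ * π⁻¹ = γ * (π⁻¹ * γ) * γ⁻¹ := by group
    rw [hc, numCycles_conj]
  have e4 : numCycles (σ⁻¹ * γ) = numCycles (γ * σ⁻¹) := by
    have hc : σ⁻¹ * γ = σ⁻¹ * (γ * σ⁻¹) * σ⁻¹⁻¹ := by group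
    rw [hc, numCycles_conj]
  refine (le'_iff σ (γ * π⁻¹)).2 ?_
  have h1 := hπ.2
  have h2 := hσ.2
  omega

end ThirdOrderFree
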